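/- Define E(u) = 4π·H(u) + (1/4)·M(u)·P(u) - (1/2)·M(u)² and B(u) = E(u) - (1/4)|Q(u)|². Then B(u) ≥ 0 for all u ∈ L^{2,1}_E if and only if E(u) ≥ 0 for all u ∈ L^{2,1}_E. -/

import Mathlib

open MeasureTheory

noncomputable def Mfun (u : ℂ → ℂ) : ℝ := ∫ z : ℂ, ‖u z‖ ^ 2
noncomputable def Pfun (u : ℂ → ℂ) : ℝ := ∫ z : ℂ, (‖z‖ ^ 2 - 1) * ‖u z‖ ^ 2
noncomputable def Hfun (u : ℂ → ℂ) : ℝ := (1 / 4) * ∫ z : ℂ, ‖u z‖ ^ 4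
noncomputable def Qfun (u : ℂ → ℂ) : ℂ := ∫ z : ℂ, z * ((‖u z‖ ^ 2 : ℝ) : ℂ)

/-- `E(u) = 4π H(u) + (1/4) M(u) P(u) - (1/2) M(u)²`. -/
noncomputable def Efun (u : ℂ → ℂ) : ℝ :=
  4 * Real.pi * Hfun u + (1 / 4) * (Mfun u * Pfun u) - (1 / 2) * Mfun u ^ 2

/-- `B(u) = E(u) - (1/4)|Q(u)|²`. -/
noncomputable def Bfun (u : ℂ → ℂ) : ℝ := Efun u - (1 / 4) * ‖Qfun u‖ ^ 2

/-- Membership in the weighted Bargmann–Fock space `L^{2,1}_E`. -/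
def MemL21E (u : ℂ → ℂ) : Prop :=
  (∃ f : ℂ → ℂ, Differentiable ℂ f ∧
    ∀ z, u z = ((Real.exp (-‖z‖ ^ 2 / 2) : ℝ) : ℂ) * f z) ∧
  MeasureTheory.Integrable (fun z : ℂ => (1 + ‖z‖ ^ 2) * ‖u z‖ ^ 2)

section Aux

open Complex

lemma MemL21E.continuous {u : ℂ → ℂ} (hu : MemL21E u) : Continuous u := by
  obtain ⟨⟨f, hf, hrep⟩, -⟩ := hu
  have : u = fun z => ((Real.exp (-‖z‖ ^ 2 / 2) : ℝ) : ℂ) * f z := funext hrep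
  rw [this]
  exact (Complex.continuous_ofReal.comp
    ((continuous_norm.pow 2).neg.div_const 2).rexp).mul hf.continuous

lemma MemL21E.int2 {u : ℂ → ℂ} (hu : MemL21E u) :
    Integrable (fun z : ℂ => ‖u z‖ ^ 2) := by
  refine hu.2.mono ?_ ?_
  · exact ((hu.continuous.norm.pow 2)).aestronglyMeasurable
  · refine Filter.Eventually.of_forall fun z => ?_
    have h1 : (0:ℝ) ≤ ‖u z‖ ^ 2 := sq_nonneg _
    have h2 : (0:ℝ) ≤ ‖z‖ ^ 2 := sq_nonneg _
    rw [Real.norm_eq_abs, Real.norm_eq_abs, _root_.abs_of_nonneg h1,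
      _root_.abs_of_nonneg (by nlinarith : (0:ℝ) ≤ (1 + ‖z‖ ^ 2) * ‖u z‖ ^ 2)]
    nlinarith

lemma MemL21E.int1 {u : ℂ → ℂ} (hu : MemL21E u) :
    Integrable (fun z : ℂ => z * ((‖u z‖ ^ 2 : ℝ) : ℂ)) := by
  refine hu.2.mono ?_ ?_
  · exact (continuous_id.mul
      (Complex.continuous_ofReal.comp (hu.continuous.norm.pow 2))).aestronglyMeasurable
  · refine Filter.Eventually.of_forall fun z => ?_
    have h1 : (0:ℝ) ≤ ‖u z‖ ^ 2 := sq_nonneg _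
    have h2 : (0:ℝ) ≤ ‖z‖ := norm_nonneg _
    have h3 : ‖z‖ ≤ 1 + ‖z‖ ^ 2 := by nlinarith
    have h4 : ‖z * ((‖u z‖ ^ 2 : ℝ) : ℂ)‖ = ‖z‖ * ‖u z‖ ^ 2 := by
      rw [norm_mul, Complex.norm_real, Real.norm_eq_abs, _root_.abs_of_nonneg h1]
    rw [h4, Real.norm_eq_abs,
      _root_.abs_of_nonneg (by nlinarith : (0:ℝ) ≤ (1 + ‖z‖ ^ 2) * ‖u z‖ ^ 2)]
    nlinarith

lemma MemL21E.int3 {u : ℂ → ℂ} (hu : MemL21E u) :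
    Integrable (fun z : ℂ => (‖z‖ ^ 2 - 1) * ‖u z‖ ^ 2) := by
  refine hu.2.mono ?_ ?_
  · exact (((continuous_norm.pow 2).sub continuous_const).mul
      (hu.continuous.norm.pow 2)).aestronglyMeasurable
  · refine Filter.Eventually.of_forall fun z => ?_
    have h1 : (0:ℝ) ≤ ‖u z‖ ^ 2 := sq_nonneg _
    have h2 : (0:ℝ) ≤ ‖z‖ ^ 2 := sq_nonneg _
    rw [Real.norm_eq_abs, Real.norm_eq_abs, abs_mul,
      _root_.abs_of_nonneg (by nlinarith : (0:ℝ) ≤ (1 + ‖z‖ ^ 2) * ‖u z‖ ^ 2),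
      _root_.abs_of_nonneg h1]
    have h3 : |‖z‖ ^ 2 - 1| ≤ 1 + ‖z‖ ^ 2 := by
      rw [abs_le]; constructor <;> nlinarith
    nlinarith

lemma Mfun_nonneg (u : ℂ → ℂ) : 0 ≤ Mfun u :=
  integral_nonneg fun z => sq_nonneg _

lemma norm_sub_sq' (z α : ℂ) :
    ‖z - α‖ ^ 2 = ‖z‖ ^ 2 + ‖α‖ ^ 2 - 2 * (z * (starRingEnd ℂ) α).re := by
  simp only [Complex.sq_norm, Complex.normSq_sub]

lemma norm_add_sq' (z α : ℂ) :
    ‖z + α‖ ^ 2 = ‖z‖ ^ 2 + ‖α‖ ^ 2 + 2 * (z * (starRingEnd ℂ) α).re := by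
  simp only [Complex.sq_norm, Complex.normSq_add]

lemma mul_ofReal_re (x : ℂ) (r : ℝ) : (x * ((r : ℝ) : ℂ)).re = x.re * r := by
  simp [Complex.mul_re]

/-- The key exponent identity. -/
lemma exp_ident (z α : ℂ) :
    ((-‖z‖ ^ 2 / 2 : ℝ) : ℂ) + (z * (starRingEnd ℂ) α - ((‖α‖ ^ 2 : ℝ) : ℂ) / 2)
      = Complex.I * (((z * (starRingEnd ℂ) α).im : ℝ) : ℂ)
        + ((-‖z - α‖ ^ 2 / 2 : ℝ) : ℂ) := by
  rw [norm_sub_sq']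
  rw [← Complex.re_add_im (z * (starRingEnd ℂ) α)]
  push_cast
  simp only [Complex.add_re, Complex.add_im, Complex.mul_I_re, Complex.mul_I_im,
    Complex.ofReal_re, Complex.ofReal_im]
  ring

end Aux

section Translate

open Complex

variable (u : ℂ → ℂ) (α : ℂ)

/-- The translated function with a holomorphic phase. -/
noncomputable def Tfun : ℂ → ℂ :=
  fun z => Complex.exp (Complex.I * (((z * (starRingEnd ℂ) α).im : ℝ) : ℂ)) * u (z - α)

lemma Tfun_norm (z : ℂ) : ‖Tfun u α z‖ = ‖u (z - α)‖ := by
  simp [Tfun, Complex.norm_exp]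

lemma Tfun_mem {u : ℂ → ℂ} (hu : MemL21E u) (α : ℂ) : MemL21E (Tfun u α) := by
  obtain ⟨⟨f, hf, hrep⟩, hint⟩ := hu
  constructor
  · refine ⟨fun z => Complex.exp (z * (starRingEnd ℂ) α - ((‖α‖ ^ 2 : ℝ) : ℂ) / 2)
      * f (z - α), ?_, ?_⟩
    · exact (Complex.differentiable_exp.comp
        ((differentiable_id.mul_const _).sub_const _)).mul
        (hf.comp (differentiable_id.sub_const _))
    · intro z
      rw [Tfun, hrep (z - α)]
      rw [Complex.ofReal_exp, Complex.ofReal_exp]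
      rw [← mul_assoc, ← Complex.exp_add, ← mul_assoc, ← Complex.exp_add, ← exp_ident]
  · have hF : Integrable (fun w : ℂ => (1 + ‖w + α‖ ^ 2) * ‖u w‖ ^ 2) := by
      refine (hint.const_mul (2 + 2 * ‖α‖ ^ 2)).mono ?_ ?_
      · have hc : Continuous u := MemL21E.continuous ⟨⟨f, hf, hrep⟩, hint⟩
        exact ((continuous_const.add
          (((continuous_id.add continuous_const).norm).pow 2)).mul
          (hc.norm.pow 2)).aestronglyMeasurable
      · refine Filter.Eventually.of_forall fun w => ?_
        have h1 : (0:ℝ) ≤ ‖u w‖ ^ 2 := sq_nonneg _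
        have h2 : ‖w + α‖ ≤ ‖w‖ + ‖α‖ := norm_add_le _ _
        have h3 : (0:ℝ) ≤ ‖w + α‖ := norm_nonneg _
        have h4 : ‖w + α‖ ^ 2 ≤ 2 * ‖w‖ ^ 2 + 2 * ‖α‖ ^ 2 := by
          nlinarith [sq_nonneg (‖w‖ - ‖α‖), mul_self_le_mul_self h3 h2,
            norm_nonneg w, norm_nonneg α]
        have key : (1 + ‖w + α‖ ^ 2) ≤ (2 + 2 * ‖α‖ ^ 2) * (1 + ‖w‖ ^ 2) := by
          nlinarith [mul_nonneg (sq_nonneg ‖α‖) (sq_nonneg ‖w‖), sq_nonneg ‖w‖, sq_nonneg ‖α‖]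
        rw [Real.norm_eq_abs, Real.norm_eq_abs,
          _root_.abs_of_nonneg (by positivity : (0:ℝ) ≤ (1 + ‖w + α‖ ^ 2) * ‖u w‖ ^ 2),
          _root_.abs_of_nonneg (by positivity :
            (0:ℝ) ≤ (2 + 2 * ‖α‖ ^ 2) * ((1 + ‖w‖ ^ 2) * ‖u w‖ ^ 2))]
        nlinarith [mul_le_mul_of_nonneg_right key h1]
    have h5 := hF.comp_sub_right α
    refine h5.congr (Filter.Eventually.of_forall fun z => ?_)
    simp only [sub_add_cancel]
    rw [Tfun_norm]

lemma Tfun_M : Mfun (Tfun u α) = Mfun u := by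
  unfold Mfun
  simp_rw [Tfun_norm]
  exact integral_sub_right_eq_self (fun z => ‖u z‖ ^ 2) α

lemma Tfun_H : Hfun (Tfun u α) = Hfun u := by
  unfold Hfun
  simp_rw [Tfun_norm]
  rw [integral_sub_right_eq_self (fun z => ‖u z‖ ^ 4) α]

lemma Tfun_Q {u : ℂ → ℂ} (hu : MemL21E u) (α : ℂ) :
    Qfun (Tfun u α) = Qfun u + α * ((Mfun u : ℝ) : ℂ) := by
  unfold Qfun
  simp_rw [Tfun_norm]
  have h1 : (∫ z : ℂ, z * ((‖u (z - α)‖ ^ 2 : ℝ) : ℂ))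
      = ∫ z : ℂ, (z + α) * ((‖u z‖ ^ 2 : ℝ) : ℂ) := by
    rw [← integral_sub_right_eq_self (fun z => (z + α) * ((‖u z‖ ^ 2 : ℝ) : ℂ)) α]
    simp
  rw [h1]
  have h2 : ∀ z : ℂ, (z + α) * ((‖u z‖ ^ 2 : ℝ) : ℂ)
      = z * ((‖u z‖ ^ 2 : ℝ) : ℂ) + α * ((‖u z‖ ^ 2 : ℝ) : ℂ) := fun z => by ring
  simp_rw [h2]
  have hconst : Integrable (fun z : ℂ => α * ((‖u z‖ ^ 2 : ℝ) : ℂ)) :=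
    (hu.int2.ofReal (𝕜 := ℂ)).const_mul α
  rw [integral_add hu.int1 hconst, integral_const_mul]
  exact congrArg₂ (· + ·) rfl (congrArg (α * ·)
    (integral_ofReal (𝕜 := ℂ) (f := fun z : ℂ => ‖u z‖ ^ 2) (μ := volume)))

lemma Tfun_P {u : ℂ → ℂ} (hu : MemL21E u) (α : ℂ) :
    Pfun (Tfun u α) = Pfun u + 2 * (Qfun u * (starRingEnd ℂ) α).re + ‖α‖ ^ 2 * Mfun u := by
  unfold Pfun
  simp_rw [Tfun_norm]
  have h1 : (∫ z : ℂ, (‖z‖ ^ 2 - 1) * ‖u (z - α)‖ ^ 2)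
      = ∫ z : ℂ, (‖z + α‖ ^ 2 - 1) * ‖u z‖ ^ 2 := by
    rw [← integral_sub_right_eq_self (fun z => (‖z + α‖ ^ 2 - 1) * ‖u z‖ ^ 2) α]
    simp
  rw [h1]
  have h2 : ∀ z : ℂ, (‖z + α‖ ^ 2 - 1) * ‖u z‖ ^ 2
      = ((‖z‖ ^ 2 - 1) * ‖u z‖ ^ 2 + 2 * ((z * (starRingEnd ℂ) α) * ((‖u z‖ ^ 2 : ℝ) : ℂ)).re)
        + ‖α‖ ^ 2 * ‖u z‖ ^ 2 := by
    intro z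
    rw [norm_add_sq', mul_ofReal_re]
    ring
  simp_rw [h2]
  have hint4 : Integrable (fun z : ℂ => (z * (starRingEnd ℂ) α) * ((‖u z‖ ^ 2 : ℝ) : ℂ)) := by
    have e : (fun z : ℂ => (z * (starRingEnd ℂ) α) * ((‖u z‖ ^ 2 : ℝ) : ℂ))
        = fun z : ℂ => (z * ((‖u z‖ ^ 2 : ℝ) : ℂ)) * (starRingEnd ℂ) α := by
      funext z; ring
    rw [e]
    exact hu.int1.mul_const _
  have hint5 : Integrable (fun z : ℂ => ((z * (starRingEnd ℂ) α) * ((‖u z‖ ^ 2 : ℝ) : ℂ)).re) :=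
    hint4.re
  have hint6 : Integrable (fun z : ℂ =>
      2 * ((z * (starRingEnd ℂ) α) * ((‖u z‖ ^ 2 : ℝ) : ℂ)).re) := hint5.const_mul 2
  have hint7 : Integrable (fun z : ℂ =>
      (‖z‖ ^ 2 - 1) * ‖u z‖ ^ 2
        + 2 * ((z * (starRingEnd ℂ) α) * ((‖u z‖ ^ 2 : ℝ) : ℂ)).re) := hu.int3.add hint6
  have hint8 : Integrable (fun z : ℂ => ‖α‖ ^ 2 * ‖u z‖ ^ 2) := hu.int2.const_mul _
  rw [integral_add hint7 hint8, integral_add hu.int3 hint6, integral_const_mul,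
    integral_const_mul]
  have hre2 : (∫ z : ℂ, ((z * (starRingEnd ℂ) α) * ((‖u z‖ ^ 2 : ℝ) : ℂ)).re)
      = (Qfun u * (starRingEnd ℂ) α).re := by
    have h9 : (∫ z : ℂ, ((z * (starRingEnd ℂ) α) * ((‖u z‖ ^ 2 : ℝ) : ℂ)).re)
        = (∫ z : ℂ, (z * (starRingEnd ℂ) α) * ((‖u z‖ ^ 2 : ℝ) : ℂ)).re := integral_re hint4
    rw [h9]
    congr 1
    have e : (fun z : ℂ => (z * (starRingEnd ℂ) α) * ((‖u z‖ ^ 2 : ℝ) : ℂ))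
        = fun z : ℂ => (z * ((‖u z‖ ^ 2 : ℝ) : ℂ)) * (starRingEnd ℂ) α := by
      funext z; ring
    rw [e, integral_mul_const]
    rfl
  rw [hre2]
  rfl

end Translate

/-- `B ≥ 0` on `L^{2,1}_E` if and only if `E ≥ 0` on `L^{2,1}_E`. -/
theorem stmt14 :
    (∀ u : ℂ → ℂ, MemL21E u → 0 ≤ Bfun u) ↔ (∀ u : ℂ → ℂ, MemL21E u → 0 ≤ Efun u) := by
  constructor
  · intro h u hu
    have hB := h u hu
    have hle : Bfun u ≤ Efun u := by
      unfold Bfun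
      nlinarith [sq_nonneg ‖Qfun u‖]
    linarith
  · intro h u hu
    by_cases hM : Mfun u = 0
    · -- then ‖u‖² = 0 a.e., so Q u = 0 and B u = E u ≥ 0
      have h0 : ∀ᵐ z : ℂ, ‖u z‖ ^ 2 = 0 := by
        have h0' := (integral_eq_zero_iff_of_nonneg_ae
          (Filter.Eventually.of_forall fun z => sq_nonneg ‖u z‖) hu.int2).mp hM
        filter_upwards [h0'] with z hz
        simpa using hz
      have hQ : Qfun u = 0 := by
        unfold Qfun
        rw [← integral_zero ℂ ℂ]
        refine integral_congr_ae ?_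
        filter_upwards [h0] with z hz
        have hz' : ((‖u z‖ ^ 2 : ℝ) : ℂ) = 0 := by exact_mod_cast hz
        rw [hz', mul_zero]
      have hE := h u hu
      unfold Bfun
      rw [hQ]
      simpa using hE
    · have hMpos : 0 < Mfun u := lt_of_le_of_ne (Mfun_nonneg u) (Ne.symm hM)
      set α : ℂ := -(Qfun u) / ((Mfun u : ℝ) : ℂ) with hα
      have hv := h (Tfun u α) (Tfun_mem hu α)
      have hp : Qfun u * (starRingEnd ℂ) α = (((-‖Qfun u‖ ^ 2 / Mfun u) : ℝ) : ℂ) := by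
        rw [hα, map_div₀, map_neg, Complex.conj_ofReal, mul_div_assoc', mul_neg,
          Complex.mul_conj, Complex.normSq_eq_norm_sq]
        push_cast
        ring
      have hQα : (Qfun u * (starRingEnd ℂ) α).re = -‖Qfun u‖ ^ 2 / Mfun u := by
        rw [hp, Complex.ofReal_re]
      have hnα : ‖α‖ ^ 2 = ‖Qfun u‖ ^ 2 / Mfun u ^ 2 := by
        rw [hα, norm_div, norm_neg, Complex.norm_real, Real.norm_eq_abs,
          abs_of_pos hMpos, div_pow]
      have hE : Efun (Tfun u α) = Bfun u := by
        unfold Efun Bfun Efun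
        rw [Tfun_H, Tfun_M, Tfun_P hu α, hQα, hnα]
        field_simp
        ring
      rw [← hE]
      exact hv
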